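/- For positive semidefinite operators $A, B_1, \ldots, B_r$ on a finite-dimensional Hilbert space, the fidelity satisfies $F\big(A, \sum_{i=1}^r B_i\big) \le \sum_{i=1}^r F(A, B_i)$. -/

import Mathlib

open Matrix
open scoped ComplexOrder

/-- The positive semidefinite square root, as `Matrix.PosSemidef.sqrt` was defined in the older
Mathlib (since removed). -/
noncomputable def Matrix.PosSemidef.sqrt {n 𝕜 : Type*} [Fintype n] [DecidableEq n] [RCLike 𝕜]
    {A : Matrix n n 𝕜} (hA : A.PosSemidef) : Matrix n n 𝕜 :=
  hA.1.eigenvectorUnitary.1 * diagonal ((↑) ∘ (√·) ∘ hA.1.eigenvalues) *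
    (star hA.1.eigenvectorUnitary : Matrix n n 𝕜)

noncomputable def matAbs {m : ℕ} (A : Matrix (Fin m) (Fin m) ℂ) : Matrix (Fin m) (Fin m) ℂ :=
  (Matrix.posSemidef_conjTranspose_mul_self A).sqrt

noncomputable def traceNorm {m : ℕ} (A : Matrix (Fin m) (Fin m) ℂ) : ℝ :=
  ((matAbs A).trace).re

open Classical in
noncomputable def psdSqrt {m : ℕ} (A : Matrix (Fin m) (Fin m) ℂ) : Matrix (Fin m) (Fin m) ℂ :=
  if h : A.PosSemidef then h.sqrt else 0

noncomputable def fid {m : ℕ} (A B : Matrix (Fin m) (Fin m) ℂ) : ℝ :=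
  traceNorm (psdSqrt A * psdSqrt B)

noncomputable def matPosPart {m : ℕ} (A : Matrix (Fin m) (Fin m) ℂ) : Matrix (Fin m) (Fin m) ℂ :=
  (2⁻¹ : ℂ) • (matAbs A + A)

noncomputable def matNegPart {m : ℕ} (A : Matrix (Fin m) (Fin m) ℂ) : Matrix (Fin m) (Fin m) ℂ :=
  (2⁻¹ : ℂ) • (matAbs A - A)

section SqrtPort
open scoped MatrixOrder

lemma Matrix.PosSemidef.sqrt_eq_cfcSqrt {n : Type*} [Fintype n] [DecidableEq n]
    {A : Matrix n n ℂ} (hA : A.PosSemidef) : hA.sqrt = CFC.sqrt A := by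
  rw [CFC.sqrt_eq_cfc, cfc_nnreal_eq_real _ A, hA.1.cfc_eq]
  unfold Matrix.PosSemidef.sqrt IsHermitian.cfc
  rw [Unitary.conjStarAlgAut_apply]
  congr 3
  funext i
  simp [max_eq_left (hA.eigenvalues_nonneg i)]

lemma Matrix.PosSemidef.posSemidef_sqrt {n : Type*} [Fintype n] [DecidableEq n]
    {A : Matrix n n ℂ} (hA : A.PosSemidef) : hA.sqrt.PosSemidef := by
  rw [hA.sqrt_eq_cfcSqrt]
  exact (CFC.sqrt_nonneg A).posSemidef

lemma Matrix.PosSemidef.sqrt_mul_self {n : Type*} [Fintype n] [DecidableEq n]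
    {A : Matrix n n ℂ} (hA : A.PosSemidef) : hA.sqrt * hA.sqrt = A := by
  rw [hA.sqrt_eq_cfcSqrt]
  exact CFC.sqrt_mul_sqrt_self A hA.nonneg

lemma Matrix.PosSemidef.eq_sqrt_of_sq_eq {n : Type*} [Fintype n] [DecidableEq n]
    {A : Matrix n n ℂ} (hA : A.PosSemidef) {B : Matrix n n ℂ} (hB : B.PosSemidef)
    (hAB : A ^ 2 = B) : A = hB.sqrt := by
  rw [hB.sqrt_eq_cfcSqrt]
  exact (CFC.sqrt_unique (by rw [← pow_two]; exact hAB) hA.nonneg).symm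

end SqrtPort

set_option linter.unusedSectionVars false
set_option maxHeartbeats 1000000

section FidSub

variable {n m : Type*} [Fintype n] [DecidableEq n] [Fintype m] [DecidableEq m]

noncomputable def gAbs {ι : Type*} [Fintype ι] [DecidableEq ι] (A : Matrix ι ι ℂ) :
    Matrix ι ι ℂ :=
  (Matrix.posSemidef_conjTranspose_mul_self A).sqrt

noncomputable def nrm (x : n → ℂ) : ℝ := Real.sqrt (star x ⬝ᵥ x).re

def Contr (V : Matrix n n ℂ) : Prop :=
  ∀ x : n → ℂ, (star (V *ᵥ x) ⬝ᵥ (V *ᵥ x)).re ≤ (star x ⬝ᵥ x).re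

lemma ip_self_nonneg (x : n → ℂ) : 0 ≤ (star x ⬝ᵥ x).re := by
  have := dotProduct_star_self_nonneg x
  exact (Complex.le_def.mp this).1

lemma nrm_nonneg (x : n → ℂ) : 0 ≤ nrm x := Real.sqrt_nonneg _

lemma nrm_sq (x : n → ℂ) : nrm x ^ 2 = (star x ⬝ᵥ x).re := by
  rw [nrm, Real.sq_sqrt (ip_self_nonneg x)]

lemma cs (x y : n → ℂ) : ‖star x ⬝ᵥ y‖ ≤ nrm x * nrm y := by
  have h := norm_inner_le_norm (𝕜 := ℂ) ((WithLp.equiv 2 (n → ℂ)).symm x)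
      ((WithLp.equiv 2 (n → ℂ)).symm y)
  rw [show inner ℂ ((WithLp.equiv 2 (n → ℂ)).symm x) ((WithLp.equiv 2 (n → ℂ)).symm y)
      = star x ⬝ᵥ y by rw [dotProduct_comm]; rfl] at h
  have hx : ‖(WithLp.equiv 2 (n → ℂ)).symm x‖ = nrm x := by
    rw [norm_eq_sqrt_re_inner (𝕜 := ℂ), nrm, dotProduct_comm]
    rfl
  have hy : ‖(WithLp.equiv 2 (n → ℂ)).symm y‖ = nrm y := by
    rw [norm_eq_sqrt_re_inner (𝕜 := ℂ), nrm, dotProduct_comm]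
    rfl
  rwa [hx, hy] at h

lemma contr_nrm {V : Matrix n n ℂ} (hV : Contr V) (x : n → ℂ) : nrm (V *ᵥ x) ≤ nrm x :=
  Real.sqrt_le_sqrt (hV x)

-- ⟨Mx, y⟩ = ⟨x, Mᴴ y⟩ style

lemma ip_mulVec_self (M : Matrix n n ℂ) (x : n → ℂ) :
    star (M *ᵥ x) ⬝ᵥ (M *ᵥ x) = star x ⬝ᵥ ((Mᴴ * M) *ᵥ x) := by
  rw [star_mulVec, dotProduct_mulVec, dotProduct_mulVec, vecMul_vecMul]

lemma contr_conjTranspose {V : Matrix n n ℂ} (hV : Contr V) : Contr Vᴴ := by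
  intro x
  have key : nrm (Vᴴ *ᵥ x) ^ 2 ≤ nrm x * nrm (Vᴴ *ᵥ x) := by
    rw [nrm_sq, ip_mulVec_self, conjTranspose_conjTranspose, ← mulVec_mulVec]
    calc (star x ⬝ᵥ (V *ᵥ (Vᴴ *ᵥ x))).re ≤ ‖star x ⬝ᵥ (V *ᵥ (Vᴴ *ᵥ x))‖ :=
          Complex.re_le_norm _
      _ ≤ nrm x * nrm (V *ᵥ (Vᴴ *ᵥ x)) := cs _ _
      _ ≤ nrm x * nrm (Vᴴ *ᵥ x) := by
          exact mul_le_mul_of_nonneg_left (contr_nrm hV _) (nrm_nonneg _)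
  have h2 : nrm (Vᴴ *ᵥ x) ≤ nrm x := by
    nlinarith [nrm_nonneg (Vᴴ *ᵥ x), nrm_nonneg x]
  calc (star (Vᴴ *ᵥ x) ⬝ᵥ (Vᴴ *ᵥ x)).re = nrm (Vᴴ *ᵥ x) ^ 2 := (nrm_sq _).symm
    _ ≤ nrm x ^ 2 := by nlinarith [nrm_nonneg (Vᴴ *ᵥ x), nrm_nonneg x]
    _ = (star x ⬝ᵥ x).re := nrm_sq _

lemma gAbs_spec (Z : Matrix n n ℂ) : ∃ (U : Matrix n n ℂ) (e : n → ℝ),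
    U * Uᴴ = 1 ∧ Uᴴ * U = 1 ∧ (∀ k, 0 ≤ e k) ∧
    Zᴴ * Z = U * diagonal (fun k => (e k : ℂ)^2) * Uᴴ ∧
    (gAbs Z).trace = ∑ k, (e k : ℂ) := by
  have hZ : (Zᴴ * Z).PosSemidef := posSemidef_conjTranspose_mul_self Z
  have hG : (gAbs Z).PosSemidef := hZ.posSemidef_sqrt
  have h1 : (gAbs Z).IsHermitian := hG.1
  have hGG : gAbs Z * gAbs Z = Zᴴ * Z := hZ.sqrt_mul_self
  have hsp := h1.spectral_theorem
  rw [Unitary.conjStarAlgAut_apply] at hsp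
  have hnn : ∀ i, 0 ≤ h1.eigenvalues i := hG.eigenvalues_nonneg
  have hu1 : (h1.eigenvectorUnitary : Matrix n n ℂ) * star (h1.eigenvectorUnitary : Matrix n n ℂ) = 1 :=
    Matrix.mem_unitaryGroup_iff.mp (h1.eigenvectorUnitary).2
  have hu2 : star (h1.eigenvectorUnitary : Matrix n n ℂ) * (h1.eigenvectorUnitary : Matrix n n ℂ) = 1 :=
    Matrix.mem_unitaryGroup_iff'.mp (h1.eigenvectorUnitary).2
  obtain ⟨U, hU⟩ : ∃ U', (h1.eigenvectorUnitary : Matrix n n ℂ) = U' := ⟨_, rfl⟩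
  obtain ⟨e, he⟩ : ∃ e', h1.eigenvalues = e' := ⟨_, rfl⟩
  rw [hU, he] at hsp
  rw [he] at hnn
  rw [hU] at hu1 hu2
  rw [Matrix.star_eq_conjTranspose] at hsp hu1 hu2
  have hco : (RCLike.ofReal ∘ e : n → ℂ) = fun k => (e k : ℂ) := rfl
  rw [hco] at hsp
  refine ⟨U, e, hu1, hu2, hnn, ?_, ?_⟩
  · rw [← hGG, hsp]
    calc (U * diagonal (fun k => (e k : ℂ)) * Uᴴ) *
          (U * diagonal (fun k => (e k : ℂ)) * Uᴴ)
        = U * (diagonal (fun k => (e k : ℂ)) * ((Uᴴ * U) *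
            (diagonal (fun k => (e k : ℂ)) * Uᴴ))) := by
          simp only [Matrix.mul_assoc]
      _ = U * (diagonal (fun k => (e k : ℂ)) *
            diagonal (fun k => (e k : ℂ))) * Uᴴ := by
          rw [hu2]; simp only [Matrix.one_mul, Matrix.mul_assoc]
      _ = U * diagonal (fun k => (e k : ℂ)^2) * Uᴴ := by
          rw [diagonal_mul_diagonal]
          congr 1
          ext k
          ring_nf
  · rw [hsp, Matrix.trace_mul_cycle, hu2, Matrix.one_mul, trace_diagonal]

lemma trace_bound {V : Matrix n n ℂ} (Z : Matrix n n ℂ) (hV : Contr V) :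
    ‖(Vᴴ * Z).trace‖ ≤ (gAbs Z).trace.re := by
  obtain ⟨U, e, hu1, hu2, hnn, hZZ, htr⟩ := gAbs_spec Z
  set W := Z * U with hW
  have hWW : Wᴴ * W = diagonal (fun k => (e k : ℂ)^2) := by
    rw [hW, conjTranspose_mul]
    calc Uᴴ * Zᴴ * (Z * U) = Uᴴ * (Zᴴ * Z) * U := by simp only [Matrix.mul_assoc]
      _ = Uᴴ * (U * diagonal (fun k => (e k : ℂ)^2) * Uᴴ) * U := by rw [hZZ]
      _ = (Uᴴ * U) * diagonal (fun k => (e k : ℂ)^2) * (Uᴴ * U) := by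
          simp only [Matrix.mul_assoc]
      _ = diagonal (fun k => (e k : ℂ)^2) := by rw [hu2]; simp
  have hZW : Z = W * Uᴴ := by
    rw [hW, Matrix.mul_assoc, hu1, Matrix.mul_one]
  have htrace : (Vᴴ * Z).trace = ∑ k, star (V *ᵥ (fun l => U l k)) ⬝ᵥ (fun l => W l k) := by
    conv_lhs => rw [hZW, ← Matrix.mul_assoc, Matrix.trace_mul_comm, ← Matrix.mul_assoc]
    rw [Matrix.trace]
    refine Finset.sum_congr rfl fun k _ => ?_
    rw [Matrix.diag]
    simp only [Matrix.mul_apply, Matrix.mulVec, dotProduct, conjTranspose_apply,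
      Pi.star_apply, star_sum, star_mul', Finset.sum_mul]
    exact Finset.sum_congr rfl fun j _ => Finset.sum_congr rfl fun m _ => by ring
  rw [htrace]
  calc ‖∑ k, star (V *ᵥ (fun l => U l k)) ⬝ᵥ (fun l => W l k)‖
      ≤ ∑ k, ‖star (V *ᵥ (fun l => U l k)) ⬝ᵥ (fun l => W l k)‖ := norm_sum_le _ _
    _ ≤ ∑ k, e k := by
        refine Finset.sum_le_sum fun k _ => ?_
        have hu : nrm (fun l => U l k) = 1 := by
          have h1 : (star (fun l => U l k) ⬝ᵥ (fun l => U l k)) = (Uᴴ * U) k k := by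
            simp only [Matrix.mul_apply, dotProduct, conjTranspose_apply, Pi.star_apply]
          rw [nrm, h1, hu2]
          simp
        have hw : nrm (fun l => W l k) = e k := by
          have h1 : (star (fun l => W l k) ⬝ᵥ (fun l => W l k)) = (Wᴴ * W) k k := by
            simp only [Matrix.mul_apply, dotProduct, conjTranspose_apply, Pi.star_apply]
          rw [nrm, h1, hWW, diagonal_apply_eq]
          rw [show ((e k : ℂ)^2).re = (e k)^2 by
            rw [← Complex.ofReal_pow, Complex.ofReal_re]]
          exact Real.sqrt_sq (hnn k)
        calc ‖star (V *ᵥ (fun l => U l k)) ⬝ᵥ (fun l => W l k)‖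
            ≤ nrm (V *ᵥ (fun l => U l k)) * nrm (fun l => W l k) := cs _ _
          _ ≤ nrm (fun l => U l k) * nrm (fun l => W l k) :=
              mul_le_mul_of_nonneg_right (contr_nrm hV _) (nrm_nonneg _)
          _ = e k := by rw [hu, hw, one_mul]
    _ = (gAbs Z).trace.re := by
        rw [htr, ← Complex.ofReal_sum, Complex.ofReal_re]

lemma conj_ip (B C : Matrix n n ℂ) (x : n → ℂ) :
    star x ⬝ᵥ ((Bᴴ * C * B) *ᵥ x) = star (B *ᵥ x) ⬝ᵥ (C *ᵥ (B *ᵥ x)) := by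
  rw [star_mulVec, mulVec_mulVec, dotProduct_mulVec, dotProduct_mulVec, vecMul_vecMul,
    Matrix.mul_assoc]

lemma exists_dual (Z : Matrix n n ℂ) : ∃ V : Matrix n n ℂ, Contr V ∧ Contr Vᴴ ∧
    (Vᴴ * Z).trace = ((gAbs Z).trace.re : ℂ) := by
  obtain ⟨U, e, hu1, hu2, hnn, hZZ, htr⟩ := gAbs_spec Z
  set f : n → ℂ := fun k => if e k = 0 then 0 else (((e k)⁻¹ : ℝ) : ℂ) with hf
  have uconj : ∀ a b : n → ℂ, (U * diagonal a * Uᴴ) * (U * diagonal b * Uᴴ)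
      = U * diagonal (fun k => a k * b k) * Uᴴ := by
    intro a b
    have h1 : Uᴴ * (U * (diagonal b * Uᴴ)) = diagonal b * Uᴴ := by
      rw [← Matrix.mul_assoc, hu2, Matrix.one_mul]
    calc (U * diagonal a * Uᴴ) * (U * diagonal b * Uᴴ)
        = U * (diagonal a * (Uᴴ * (U * (diagonal b * Uᴴ)))) := by
          simp only [Matrix.mul_assoc]
      _ = U * (diagonal a * (diagonal b * Uᴴ)) := by rw [h1]
      _ = U * (diagonal a * diagonal b) * Uᴴ := by simp only [Matrix.mul_assoc]
      _ = U * diagonal (fun k => a k * b k) * Uᴴ := by rw [diagonal_mul_diagonal]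
  set T : Matrix n n ℂ := U * diagonal f * Uᴴ with hT
  have hfstar : star f = f := by
    funext k
    simp only [hf, Pi.star_apply]
    by_cases h : e k = 0
    · simp [h]
    · simp [h, Complex.conj_ofReal]
  have hTH : Tᴴ = T := by
    rw [hT, conjTranspose_mul, conjTranspose_mul, conjTranspose_conjTranspose,
      diagonal_conjTranspose, hfstar, Matrix.mul_assoc]
  have hVZ : (Z * T)ᴴ * Z = U * diagonal (fun k => f k * (e k : ℂ)^2) * Uᴴ := by
    calc (Z * T)ᴴ * Z = T * (Zᴴ * Z) := by
          rw [conjTranspose_mul, hTH, Matrix.mul_assoc]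
      _ = (U * diagonal f * Uᴴ) * (U * diagonal (fun k => (e k : ℂ)^2) * Uᴴ) := by
          rw [hT, hZZ]
      _ = U * diagonal (fun k => f k * (e k : ℂ)^2) * Uᴴ := uconj _ _
  have hVV : (Z * T)ᴴ * (Z * T) = U * diagonal (fun k => (f k * (e k : ℂ)^2) * f k) * Uᴴ := by
    calc (Z * T)ᴴ * (Z * T) = ((Z * T)ᴴ * Z) * T := by rw [Matrix.mul_assoc]
      _ = (U * diagonal (fun k => f k * (e k : ℂ)^2) * Uᴴ) * (U * diagonal f * Uᴴ) := by
          rw [hVZ, hT]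
      _ = U * diagonal (fun k => (f k * (e k : ℂ)^2) * f k) * Uᴴ := uconj _ _
  have hp : (fun k => (f k * (e k : ℂ)^2) * f k) = fun k => if e k = 0 then 0 else 1 := by
    funext k
    rw [hf]
    by_cases h : e k = 0
    · simp [h]
    · have h' : (e k : ℂ) ≠ 0 := by exact_mod_cast h
      simp only [h, if_false, Complex.ofReal_inv]
      field_simp
  have hcontr : Contr (Z * T) := by
    intro x
    rw [ip_mulVec_self, hVV, hp]
    have hform : U * diagonal (fun k => if e k = 0 then (0:ℂ) else 1) * Uᴴ
        = (Uᴴ)ᴴ * diagonal (fun k => if e k = 0 then (0:ℂ) else 1) * Uᴴ := by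
      rw [conjTranspose_conjTranspose]
    rw [hform, conj_ip]
    have hxx : (star x ⬝ᵥ x) = star (Uᴴ *ᵥ x) ⬝ᵥ (Uᴴ *ᵥ x) := by
      rw [ip_mulVec_self, conjTranspose_conjTranspose, hu1, Matrix.one_mulVec]
    rw [hxx]
    set y := Uᴴ *ᵥ x with hy
    have hl : star y ⬝ᵥ (diagonal (fun k => if e k = 0 then (0:ℂ) else 1) *ᵥ y)
        = ∑ k, (if e k = 0 then (0:ℂ) else 1) * (star (y k) * y k) := by
      rw [dotProduct]
      refine Finset.sum_congr rfl fun k _ => ?_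
      rw [mulVec_diagonal]
      simp only [Pi.star_apply]
      ring
    have hr : star y ⬝ᵥ y = ∑ k, star (y k) * y k := rfl
    rw [hl, hr, Complex.re_sum, Complex.re_sum]
    refine Finset.sum_le_sum fun k _ => ?_
    by_cases h : e k = 0
    · simp only [h, if_true, zero_mul, Complex.zero_re]
      have h2 : star (y k) * y k = ((Complex.normSq (y k) : ℝ) : ℂ) := by
        rw [Complex.star_def, ← Complex.normSq_eq_conj_mul_self]
      rw [h2, Complex.ofReal_re]
      exact Complex.normSq_nonneg _
    · simp [h]
  refine ⟨Z * T, hcontr, contr_conjTranspose hcontr, ?_⟩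
  rw [hVZ, Matrix.trace_mul_cycle, hu2, Matrix.one_mul, trace_diagonal,
    htr, ← Complex.ofReal_sum, Complex.ofReal_re, Complex.ofReal_sum]
  refine Finset.sum_congr rfl fun k _ => ?_
  rw [hf]
  by_cases h : e k = 0
  · simp [h]
  · have h' : (e k : ℂ) ≠ 0 := by exact_mod_cast h
    simp only [h, if_false, Complex.ofReal_inv]
    field_simp

lemma tn_sum_le {r : ℕ} (X : Fin r → Matrix n n ℂ) :
    (gAbs (∑ i, X i)).trace.re ≤ ∑ i, (gAbs (X i)).trace.re := by
  obtain ⟨V, hC, -, htr⟩ := exists_dual (∑ i, X i)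
  have h1 : (gAbs (∑ i, X i)).trace.re = ((Vᴴ * ∑ i, X i).trace).re := by
    rw [htr, Complex.ofReal_re]
  rw [h1, Matrix.mul_sum, trace_sum, Complex.re_sum]
  refine Finset.sum_le_sum fun i _ => ?_
  calc (Vᴴ * X i).trace.re ≤ ‖(Vᴴ * X i).trace‖ := Complex.re_le_norm _
    _ ≤ _ := trace_bound (X i) hC

lemma tn_conjT (Z : Matrix n n ℂ) : (gAbs Zᴴ).trace.re = (gAbs Z).trace.re := by
  suffices h : ∀ Y : Matrix n n ℂ, (gAbs Yᴴ).trace.re ≤ (gAbs Y).trace.re by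
    refine le_antisymm (h Z) ?_
    have h2 := h Zᴴ
    rwa [conjTranspose_conjTranspose] at h2
  intro Y
  obtain ⟨V, hC, hCH, htr⟩ := exists_dual Yᴴ
  have h1 : (gAbs Yᴴ).trace.re = ((Vᴴ * Yᴴ).trace).re := by rw [htr, Complex.ofReal_re]
  have h2 : (Vᴴ * Yᴴ).trace = star ((Y * V).trace) := by
    rw [← trace_conjTranspose, conjTranspose_mul]
  rw [h1, h2, Complex.star_def, Complex.conj_re, trace_mul_comm]
  calc (V * Y).trace.re = ((Vᴴᴴ) * Y).trace.re := by rw [conjTranspose_conjTranspose]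
    _ ≤ ‖((Vᴴᴴ) * Y).trace‖ := Complex.re_le_norm _
    _ ≤ _ := trace_bound Y hCH

def Jmat (i : m) : Matrix (m × n) n ℂ :=
  fun p l => if p.1 = i ∧ p.2 = l then 1 else 0

lemma Jmat_orth (i j : m) :
    (Jmat (n := n) i)ᴴ * Jmat (n := n) j = if i = j then (1 : Matrix n n ℂ) else 0 := by
  ext l l'
  rw [Matrix.mul_apply]
  simp only [conjTranspose_apply, Jmat, ite_and, apply_ite (star : ℂ → ℂ), star_one, star_zero,
    ite_mul, mul_ite, mul_one, mul_zero, zero_mul]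
  rw [Fintype.sum_prod_type]
  simp only [Finset.sum_ite_eq, Finset.sum_ite_eq', Finset.mem_univ, if_true]
  by_cases hij : i = j
  · subst hij
    by_cases hl : l = l'
    · simp [hl, Matrix.one_apply]
    · simp [hl, Matrix.one_apply]
      exact fun h => absurd h.symm hl
  · have : ∀ c : n, (if i = j then if c = l' then (if c = l then (1:ℂ) else 0) else 0 else 0) = 0 := by
      intro c; simp [hij]
    simp [hij]
    exact fun h => absurd h.symm hij

lemma Jmat_orth_self (i : m) : (Jmat (n := n) i)ᴴ * Jmat (n := n) i = (1 : Matrix n n ℂ) := by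
  simpa using Jmat_orth (n := n) (m := m) i i

lemma tn_embed (i₀ : m) (N : Matrix n n ℂ) (c : Matrix (m × n) (m × n) ℂ)
    (hc : cᴴ * c = (Jmat (n := n) i₀) * (Nᴴ * N) * ((Jmat (n := n) i₀))ᴴ) :
    (gAbs c).trace = (gAbs N).trace := by
  have hNpsd : (Nᴴ * N).PosSemidef := posSemidef_conjTranspose_mul_self N
  have hS : (gAbs N).PosSemidef := hNpsd.posSemidef_sqrt
  have hsq : gAbs N * gAbs N = Nᴴ * N := hNpsd.sqrt_mul_self
  set R := (Jmat (n := n) i₀) * gAbs N * (Jmat (n := n) i₀)ᴴ with hR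
  have hRpsd : R.PosSemidef := hS.mul_mul_conjTranspose_same _
  have hmid : (Jmat (n := n) i₀)ᴴ * ((Jmat (n := n) i₀) * (gAbs N * (Jmat (n := n) i₀)ᴴ))
      = gAbs N * (Jmat (n := n) i₀)ᴴ := by
    rw [← Matrix.mul_assoc, Jmat_orth_self, Matrix.one_mul]
  have hR2 : R ^ 2 = cᴴ * c := by
    rw [pow_two, hR, hc]
    calc ((Jmat (n := n) i₀) * gAbs N * (Jmat (n := n) i₀)ᴴ) * ((Jmat (n := n) i₀) * gAbs N * (Jmat (n := n) i₀)ᴴ)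
        = (Jmat (n := n) i₀) * (gAbs N * ((Jmat (n := n) i₀)ᴴ * ((Jmat (n := n) i₀) * (gAbs N * (Jmat (n := n) i₀)ᴴ)))) := by
          simp only [Matrix.mul_assoc]
      _ = (Jmat (n := n) i₀) * (gAbs N * (gAbs N * (Jmat (n := n) i₀)ᴴ)) := by rw [hmid]
      _ = (Jmat (n := n) i₀) * (Nᴴ * N) * (Jmat (n := n) i₀)ᴴ := by
          rw [← hsq]; simp only [Matrix.mul_assoc]
  have hceq : R = (posSemidef_conjTranspose_mul_self c).sqrt :=
    hRpsd.eq_sqrt_of_sq_eq _ hR2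
  have hgc : gAbs c = R := hceq.symm
  rw [hgc, hR, Matrix.trace_mul_cycle, Jmat_orth_self, Matrix.one_mul]

end FidSub

theorem fidelity_subadditive {d r : ℕ} (A : Matrix (Fin d) (Fin d) ℂ)
    (B : Fin r → Matrix (Fin d) (Fin d) ℂ)
    (hA : A.PosSemidef) (hB : ∀ i, (B i).PosSemidef) :
    fid A (∑ i, B i) ≤ ∑ i, fid A (B i) := by
  have psdSqrt_pos : ∀ {k : ℕ} (P : Matrix (Fin k) (Fin k) ℂ) (hP : P.PosSemidef),
      psdSqrt P = hP.sqrt := by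
    intro k P hP
    rw [psdSqrt, dif_pos hP]
  rcases Nat.eq_zero_or_pos r with hr | hr
  · subst hr
    rw [Finset.univ_eq_empty, Finset.sum_empty, Finset.sum_empty]
    have h0 : psdSqrt (0 : Matrix (Fin d) (Fin d) ℂ) = 0 := by
      rw [psdSqrt_pos 0 Matrix.PosSemidef.zero]
      exact (Matrix.PosSemidef.zero.eq_sqrt_of_sq_eq Matrix.PosSemidef.zero (by simp)).symm
    rw [fid, h0, mul_zero]
    have hm0 : matAbs (0 : Matrix (Fin d) (Fin d) ℂ) = 0 :=
      (Matrix.PosSemidef.zero.eq_sqrt_of_sq_eq _ (by simp)).symm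
    rw [traceNorm, hm0, Matrix.trace_zero]
    simp
  · set i₀ : Fin r := ⟨0, hr⟩ with hi₀
    set S := ∑ i, B i with hSdef
    have hS : S.PosSemidef := by
      rw [hSdef]
      exact Finset.sum_induction B _ (fun a b ha hb => ha.add hb) Matrix.PosSemidef.zero
        (fun i _ => hB i)
    set sA := hA.sqrt with hsA
    have hsAH : sAᴴ = sA := hA.posSemidef_sqrt.1
    have hsA2 : sA * sA = A := hA.sqrt_mul_self
    set N : Fin r → Matrix (Fin d) (Fin d) ℂ := fun i => (hB i).sqrt * sA with hN
    set N₀ := hS.sqrt * sA with hN0def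
    have hNH : ∀ i, (N i)ᴴ * N i = sA * B i * sA := by
      intro i
      have h1 : (N i)ᴴ = sA * (hB i).sqrt := by
        rw [hN, conjTranspose_mul, hsAH, ((hB i).posSemidef_sqrt.1 : _ᴴ = _)]
      rw [h1, hN]
      calc sA * (hB i).sqrt * ((hB i).sqrt * sA)
          = sA * ((hB i).sqrt * (hB i).sqrt) * sA := by simp only [Matrix.mul_assoc]
        _ = sA * B i * sA := by rw [(hB i).sqrt_mul_self]
    have hN0 : N₀ᴴ * N₀ = sA * S * sA := by
      have h1 : N₀ᴴ = sA * hS.sqrt := by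
        rw [hN0def, conjTranspose_mul, hsAH, (hS.posSemidef_sqrt.1 : _ᴴ = _)]
      rw [h1, hN0def]
      calc sA * hS.sqrt * (hS.sqrt * sA)
          = sA * (hS.sqrt * hS.sqrt) * sA := by simp only [Matrix.mul_assoc]
        _ = sA * S * sA := by rw [hS.sqrt_mul_self]
    have hsum : ∑ i, ((N i)ᴴ * N i) = N₀ᴴ * N₀ := by
      rw [hN0]
      calc ∑ i, ((N i)ᴴ * N i) = ∑ i, sA * B i * sA :=
            Finset.sum_congr rfl fun i _ => hNH i
        _ = sA * S * sA := by
            rw [hSdef, Finset.sum_congr rfl fun (i : Fin r) _ => rfl, ← Matrix.sum_mul,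
              ← Matrix.mul_sum]
    set C : Fin r → Matrix (Fin r × Fin d) (Fin r × Fin d) ℂ :=
      fun i => Jmat (n := Fin d) i * N i * (Jmat (n := Fin d) i₀)ᴴ with hC
    have hCij : ∀ i j, (C i)ᴴ * C j =
        if i = j then Jmat (n := Fin d) i₀ * ((N i)ᴴ * N j) * (Jmat (n := Fin d) i₀)ᴴ
        else 0 := by
      intro i j
      have h1 : (C i)ᴴ = Jmat (n := Fin d) i₀ * ((N i)ᴴ * (Jmat (n := Fin d) i)ᴴ) := by
        rw [hC]
        simp only [conjTranspose_mul, conjTranspose_conjTranspose, Matrix.mul_assoc]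
      rw [h1, hC]
      calc Jmat (n := Fin d) i₀ * ((N i)ᴴ * (Jmat (n := Fin d) i)ᴴ) *
            (Jmat (n := Fin d) j * N j * (Jmat (n := Fin d) i₀)ᴴ)
          = Jmat (n := Fin d) i₀ * ((N i)ᴴ * (((Jmat (n := Fin d) i)ᴴ * Jmat (n := Fin d) j) *
            (N j * (Jmat (n := Fin d) i₀)ᴴ))) := by simp only [Matrix.mul_assoc]
        _ = _ := by
            rw [Jmat_orth]
            by_cases h : i = j
            · subst h
              rw [if_pos rfl, if_pos rfl, Matrix.one_mul]
              simp only [Matrix.mul_assoc]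
            · rw [if_neg h, if_neg h, Matrix.zero_mul, Matrix.mul_zero, Matrix.mul_zero]
    have hCC : (∑ i, C i)ᴴ * (∑ i, C i) =
        Jmat (n := Fin d) i₀ * (N₀ᴴ * N₀) * (Jmat (n := Fin d) i₀)ᴴ := by
      rw [conjTranspose_sum, Finset.sum_mul_sum]
      calc ∑ i, ∑ j, (C i)ᴴ * C j
          = ∑ i, Jmat (n := Fin d) i₀ * ((N i)ᴴ * N i) * (Jmat (n := Fin d) i₀)ᴴ := by
            refine Finset.sum_congr rfl fun i _ => ?_
            rw [Finset.sum_eq_single i]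
            · rw [hCij, if_pos rfl]
            · intro j _ hj
              rw [hCij, if_neg (Ne.symm hj)]
            · simp
        _ = Jmat (n := Fin d) i₀ * (∑ i, ((N i)ᴴ * N i)) * (Jmat (n := Fin d) i₀)ᴴ := by
            rw [← Matrix.sum_mul, ← Matrix.mul_sum]
        _ = _ := by rw [hsum]
    have fid_eq : ∀ (P : Matrix (Fin d) (Fin d) ℂ) (hP : P.PosSemidef),
        fid A P = (gAbs (hP.sqrt * sA)).trace.re := by
      intro P hP
      have h3 : (hA.sqrt * hP.sqrt)ᴴ = hP.sqrt * sA := by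
        rw [conjTranspose_mul, (hP.posSemidef_sqrt.1 : _ᴴ = _), hsAH]
      have h4 : fid A P = (gAbs (hA.sqrt * hP.sqrt)).trace.re := by
        rw [show fid A P = traceNorm (psdSqrt A * psdSqrt P) from rfl,
          psdSqrt_pos A hA, psdSqrt_pos P hP]
        rfl
      rw [h4, ← tn_conjT, h3]
    calc fid A S = (gAbs N₀).trace.re := by rw [fid_eq S hS, hN0def]
      _ = (gAbs (∑ i, C i)).trace.re := by rw [tn_embed i₀ N₀ (∑ i, C i) hCC]
      _ ≤ ∑ i, (gAbs (C i)).trace.re := tn_sum_le C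
      _ = ∑ i, fid A (B i) := by
          refine Finset.sum_congr rfl fun i _ => ?_
          have h1 : (gAbs (C i)).trace = (gAbs (N i)).trace := by
            refine tn_embed i₀ (N i) (C i) ?_
            rw [hCij i i, if_pos rfl]
          rw [h1, fid_eq (B i) (hB i), hN]
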